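/- Let n be a finite nonempty index type and let adj : n → n → Prop be a relation such that for every i there exists j with adj i j. Let T̃ be the set of real n×n matrices T such that all entries are nonnegative, every row sums to 1, and T i j = 0 whenever adj i j fails; let T̂ be the subset of T̃ consisting of matrices all of whose entries lie in {0,1}. Then T̃ equals the convex hull (over ℝ) of T̂. -/

import Mathlib

theorem stmt_17 (n : Type*) [Fintype n] [Nonempty n]
    (adj : n → n → Prop) (hadj : ∀ i, ∃ j, adj i j) :
    {T : Matrix n n ℝ |
        (∀ i j, 0 ≤ T i j) ∧ (∀ i, ∑ j, T i j = 1) ∧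
        (∀ i j, ¬ adj i j → T i j = 0)} =
      convexHull ℝ
        {T : Matrix n n ℝ |
          ((∀ i j, 0 ≤ T i j) ∧ (∀ i, ∑ j, T i j = 1) ∧
            (∀ i j, ¬ adj i j → T i j = 0)) ∧
          ∀ i j, T i j = 0 ∨ T i j = 1} := by
  classical
  apply le_antisymm
  swap
  · -- convex hull ⊆ T̃
    apply convexHull_min
    · exact fun T hT => hT.1
    · intro x hx y hy a b ha hb hab
      refine ⟨?_, ?_, ?_⟩
      · intro i j
        have := mul_nonneg ha (hx.1 i j)
        have := mul_nonneg hb (hy.1 i j)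
        simp only [Matrix.add_apply, Matrix.smul_apply, smul_eq_mul]
        linarith
      · intro i
        simp only [Matrix.add_apply, Matrix.smul_apply, smul_eq_mul]
        rw [Finset.sum_add_distrib, ← Finset.mul_sum, ← Finset.mul_sum,
          hx.2.1 i, hy.2.1 i, mul_one, mul_one, hab]
      · intro i j h
        simp only [Matrix.add_apply, Matrix.smul_apply, smul_eq_mul,
          hx.2.2 i j h, hy.2.2 i j h, mul_zero, add_zero]
  · -- T̃ ⊆ convex hull
    rintro T ⟨h0, h1, h2⟩
    set w : (n → n) → ℝ := fun f => ∏ i, T i (f i) with hw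
    set z : (n → n) → Matrix n n ℝ :=
      fun f => Matrix.of (fun i j => if f i = j then (1 : ℝ) else 0) with hz
    have hw0 : ∀ f, 0 ≤ w f := fun f => Finset.prod_nonneg fun i _ => h0 i (f i)
    have hsum : ∑ f : n → n, w f = 1 := by
      have := Fintype.prod_sum (fun i j => T i j)
      simp only [h1, Finset.prod_const_one] at this
      rw [hw]; exact this.symm
    -- key identity: for fixed i0 j, ∑_{f with f i0 = j} w f = T i0 j
    have key : ∀ (i0 : n) (j : n),
        ∑ f : n → n, (if f i0 = j then w f else 0) = T i0 j := by
      intro i0 j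
      set g : n → n → ℝ := fun i l =>
        if i = i0 then (if l = j then T i0 j else 0) else T i l with hg
      have h3 : ∀ f : n → n, ∏ i, g i (f i) = if f i0 = j then w f else 0 := by
        intro f
        by_cases h : f i0 = j
        · rw [if_pos h, hw]
          refine Finset.prod_congr rfl fun i _ => ?_
          by_cases hi : i = i0
          · subst hi; simp [hg, h]
          · simp [hg, hi]
        · rw [if_neg h]
          apply Finset.prod_eq_zero (Finset.mem_univ i0)
          simp [hg, h]
      have h4 : ∑ f : n → n, ∏ i, g i (f i) = ∏ i, ∑ l, g i l := by
        rw [← Fintype.piFinset_univ, ← Finset.prod_univ_sum]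
      have h5 : ∏ i, ∑ l, g i l = T i0 j := by
        have : ∀ i, ∑ l, g i l = if i = i0 then T i0 j else 1 := by
          intro i
          by_cases hi : i = i0
          · subst hi; simp [hg]
          · simp [hg, hi, h1 i]
        rw [Finset.prod_congr rfl fun i _ => this i]
        simp
      calc ∑ f : n → n, (if f i0 = j then w f else 0)
          = ∑ f : n → n, ∏ i, g i (f i) := by
            exact (Finset.sum_congr rfl fun f _ => (h3 f)).symm
        _ = T i0 j := by rw [h4, h5]
    have hrep : ∑ f : n → n, w f • z f = T := by
      ext i j
      rw [Matrix.sum_apply]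
      simp only [Matrix.smul_apply, hz, Matrix.of_apply, smul_eq_mul]
      rw [← key i j]
      refine Finset.sum_congr rfl fun f _ => ?_
      by_cases h : f i = j <;> simp [h]
    -- use center mass over functions with nonzero weight
    set t : Finset (n → n) := Finset.univ.filter (fun f => w f ≠ 0) with ht
    have hsum' : ∑ f ∈ t, w f = 1 := by
      rw [ht, Finset.sum_filter_ne_zero, hsum]
    have hmem : ∀ f ∈ t, z f ∈ {T : Matrix n n ℝ |
        ((∀ i j, 0 ≤ T i j) ∧ (∀ i, ∑ j, T i j = 1) ∧
          (∀ i j, ¬ adj i j → T i j = 0)) ∧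
        ∀ i j, T i j = 0 ∨ T i j = 1} := by
      intro f hf
      rw [ht, Finset.mem_filter] at hf
      have hfa : ∀ i, adj i (f i) := by
        intro i
        by_contra hc
        exact hf.2 (Finset.prod_eq_zero (Finset.mem_univ i) (h2 i (f i) hc))
      refine ⟨⟨?_, ?_, ?_⟩, ?_⟩
      · intro i j; simp only [hz, Matrix.of_apply]; positivity
      · intro i; simp [hz]
      · intro i j h
        simp only [hz, Matrix.of_apply, ite_eq_right_iff]
        intro hfi
        exact absurd (hfi ▸ hfa i) h
      · intro i j
        by_cases h : f i = j <;> simp [hz, h]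
    have := Finset.centerMass_mem_convexHull t
      (fun f _ => hw0 f) (by rw [hsum']; norm_num) hmem
    rwa [Finset.centerMass_eq_of_sum_1 _ _ hsum', ht,
      Finset.sum_filter_of_ne (fun f _ hne => by
        intro h; exact hne (by rw [h, zero_smul])), hrep] at this
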